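/- arXiv:2505.00206 — 4 statements merged into one kernel-verified Lean document; each statement's English description precedes it below -/
import Mathlib

section
/- Fix an integer k ≥ 2, an integer n ≥ 2, a real α > 0 such that d = α log₂ n is a positive integer. An instance sampled from the model distribution k-OV_0^α(n) has no solution with probability at least 1 − n^{−k}; equivalently, the probability that there exists a tuple (s_1,…,s_k) ∈ {1,…,n}^k with U_{1,s_1},…,U_{k,s_k} orthogonal is at most n^{−k}. -/
open Finset

/-- The weight of a `p`-biased bit: `1` has probability `p`, `0` has probability `1 - p`. -/
noncomputable def bern (p : ℝ) (b : Bool) : ℝ := if b then p else 1 - p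

/-- Vectors `u 0, …, u (k-1) ∈ {0,1}^d` are orthogonal if at every coordinate at least one
of them has a zero. -/
def Orthog {k d : ℕ} (u : Fin k → Fin d → Bool) : Prop :=
  ∀ j : Fin d, ∃ l : Fin k, u l j = false

instance {k d : ℕ} : DecidablePred (@Orthog k d) := fun u =>
  inferInstanceAs (Decidable (∀ j : Fin d, ∃ l : Fin k, u l j = false))

lemma bern_sum (p : ℝ) : ∑ b : Bool, bern p b = 1 := by simp [bern]

lemma bern_nonneg {p : ℝ} (h0 : 0 ≤ p) (h1 : p ≤ 1) (b : Bool) : 0 ≤ bern p b := by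
  cases b <;> simp [bern] <;> linarith

lemma sum_W {ι : Type*} [Fintype ι] [DecidableEq ι] (p : ℝ) :
    ∑ f : ι → Bool, ∏ i, bern p (f i) = 1 := by
  classical
  calc ∑ f : ι → Bool, ∏ i, bern p (f i)
      = ∑ f ∈ Fintype.piFinset (fun _ : ι => (univ : Finset Bool)), ∏ i, bern p (f i) := by
        rw [Fintype.piFinset_univ]
    _ = ∏ _i : ι, ∑ b : Bool, bern p b := (Finset.prod_univ_sum _ _).symm
    _ = 1 := by simp only [bern_sum]; simp

lemma ind_mul (c : Prop) [Decidable c] (w : ℝ) :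
    (if c then (1:ℝ) else 0) * w = if c then w else 0 := by
  split_ifs <;> simp

lemma marginal {ι κ : Type*} [Fintype ι] [Fintype κ] [DecidableEq ι] [DecidableEq κ]
    (p : ℝ) (e : κ → ι) (he : Function.Injective e) (E : (κ → Bool) → ℝ) :
    ∑ f : ι → Bool, E (fun x => f (e x)) * ∏ i, bern p (f i)
      = ∑ g : κ → Bool, E g * ∏ x, bern p (g x) := by
  classical
  let P : ι → Prop := fun i => ∃ x, e x = i
  have hPe : ∀ x : κ, P (e x) := fun x => ⟨x, rfl⟩
  let Φ : (ι → Bool) ≃ ({i // P i} → Bool) × ({i // ¬ P i} → Bool) :=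
    Equiv.piEquivPiSubtypeProd P (fun _ => Bool)
  rw [← Equiv.sum_comp Φ.symm
    (fun f : ι → Bool => E (fun x => f (e x)) * ∏ i, bern p (f i)), Fintype.sum_prod_type]
  have step : ∀ g' : {i // P i} → Bool,
      (∑ h : {i // ¬ P i} → Bool,
        E (fun x => Φ.symm (g', h) (e x)) * ∏ i, bern p (Φ.symm (g', h) i))
      = E (fun x => g' ⟨e x, hPe x⟩) * ∏ i : {i // P i}, bern p (g' i) := by
    intro g'
    have hterm : ∀ h : {i // ¬ P i} → Bool,
        E (fun x => Φ.symm (g', h) (e x)) * ∏ i, bern p (Φ.symm (g', h) i)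
          = (E (fun x => g' ⟨e x, hPe x⟩) * ∏ i : {i // P i}, bern p (g' i))
              * ∏ i : {i // ¬ P i}, bern p (h i) := by
      intro h
      have hev : (fun x => Φ.symm (g', h) (e x)) = (fun x => g' ⟨e x, hPe x⟩) := by
        funext x
        simp [Φ, Equiv.piEquivPiSubtypeProd_symm_apply, hPe x]
      have hpr : (∏ i, bern p (Φ.symm (g', h) i))
          = (∏ i : {i // P i}, bern p (g' i)) * ∏ i : {i // ¬ P i}, bern p (h i) := by
        rw [← Fintype.prod_subtype_mul_prod_subtype P (fun i => bern p (Φ.symm (g', h) i))]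
        congr 1
        · exact Fintype.prod_congr _ _ fun i => by
            simp [Φ, Equiv.piEquivPiSubtypeProd_symm_apply, i.2]
        · exact Fintype.prod_congr _ _ fun i => by
            simp [Φ, Equiv.piEquivPiSubtypeProd_symm_apply, i.2]
      rw [hev, hpr]; ring
    calc (∑ h : {i // ¬ P i} → Bool,
            E (fun x => Φ.symm (g', h) (e x)) * ∏ i, bern p (Φ.symm (g', h) i))
        = ∑ h : {i // ¬ P i} → Bool,
            (E (fun x => g' ⟨e x, hPe x⟩) * ∏ i : {i // P i}, bern p (g' i))
              * ∏ i : {i // ¬ P i}, bern p (h i) := Fintype.sum_congr _ _ hterm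
      _ = (E (fun x => g' ⟨e x, hPe x⟩) * ∏ i : {i // P i}, bern p (g' i))
            * ∑ h : {i // ¬ P i} → Bool, ∏ i : {i // ¬ P i}, bern p (h i) := by
          rw [Finset.mul_sum]
      _ = _ := by rw [sum_W]; ring
  rw [Fintype.sum_congr _ _ step]
  let ψ : κ ≃ {i // P i} := Equiv.ofInjective e he
  rw [← Equiv.sum_comp (Equiv.arrowCongr ψ (Equiv.refl Bool))
    (fun g' : {i // P i} → Bool =>
      E (fun x => g' ⟨e x, hPe x⟩) * ∏ i : {i // P i}, bern p (g' i))]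
  apply Fintype.sum_congr
  intro g
  have h1 : (fun x => (Equiv.arrowCongr ψ (Equiv.refl Bool) g) ⟨e x, hPe x⟩) = g := by
    funext x
    have : ψ.symm ⟨e x, hPe x⟩ = x := Equiv.ofInjective_symm_apply he x
    simp [Equiv.arrowCongr, this]
  have h2 : (∏ i : {i // P i}, bern p ((Equiv.arrowCongr ψ (Equiv.refl Bool) g) i))
      = ∏ x : κ, bern p (g x) := by
    calc (∏ i : {i // P i}, bern p ((Equiv.arrowCongr ψ (Equiv.refl Bool) g) i))
        = ∏ i : {i // P i}, bern p (g (ψ.symm i)) := by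
          apply Fintype.prod_congr; intro i; simp [Equiv.arrowCongr]
      _ = ∏ x : κ, bern p (g x) := Equiv.prod_comp ψ.symm (fun x => bern p (g x))
  rw [h1, h2]

lemma col_sum (p : ℝ) (k : ℕ) :
    ∑ c : Fin k → Bool, (if ∃ l, c l = false then (1:ℝ) else 0) * ∏ l, bern p (c l)
      = 1 - p ^ k := by
  classical
  have h1 : ∑ c : Fin k → Bool, ∏ l, bern p (c l) = 1 := sum_W p
  have h2 : ∑ c : Fin k → Bool, (if ∀ l, c l = true then (1:ℝ) else 0) * ∏ l, bern p (c l)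
      = p ^ k := by
    calc ∑ c : Fin k → Bool, (if ∀ l, c l = true then (1:ℝ) else 0) * ∏ l, bern p (c l)
        = ∑ c : Fin k → Bool, (if c = (fun _ => true) then (∏ l, bern p (c l)) else 0) := by
          apply Fintype.sum_congr; intro c
          rw [ind_mul]
          exact if_congr (by simp [funext_iff]) rfl rfl
      _ = ∏ _l : Fin k, bern p true := by
          rw [Finset.sum_ite_eq' univ (fun _ => true) (fun c => ∏ l, bern p (c l))]
          simp
      _ = p ^ k := by simp [bern]
  have key : ∀ c : Fin k → Bool,
      (if ∃ l, c l = false then (1:ℝ) else 0) * ∏ l, bern p (c l)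
        = (∏ l, bern p (c l)) - (if ∀ l, c l = true then (1:ℝ) else 0) * ∏ l, bern p (c l) := by
    intro c
    by_cases h : ∃ l, c l = false
    · have h' : ¬ ∀ l, c l = true := by
        obtain ⟨l, hl⟩ := h; intro hall; rw [hall l] at hl; simp at hl
      simp [h, h']
    · have h' : ∀ l, c l = true := by
        intro l; by_contra hc
        exact h ⟨l, by simpa using hc⟩
      simp [h, h']
  rw [Fintype.sum_congr _ _ key, Finset.sum_sub_distrib, h1, h2]

set_option maxHeartbeats 1000000 in
lemma orthog_prob (p : ℝ) (k d : ℕ) :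
    ∑ g : Fin k × Fin d → Bool,
      (if Orthog (fun l j => g (l, j)) then (1:ℝ) else 0) * ∏ x, bern p (g x)
      = (1 - p ^ k) ^ d := by
  classical
  let ψ : (Fin d → Fin k → Bool) ≃ (Fin k × Fin d → Bool) :=
    (Equiv.curry (Fin d) (Fin k) Bool).symm.trans
      (Equiv.arrowCongr (Equiv.prodComm (Fin d) (Fin k)) (Equiv.refl Bool))
  have hψ : ∀ (v : Fin d → Fin k → Bool) (l : Fin k) (j : Fin d), ψ v (l, j) = v j l := by
    intro v l j; rfl
  rw [← Equiv.sum_comp ψ (fun g : Fin k × Fin d → Bool =>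
    (if Orthog (fun l j => g (l, j)) then (1:ℝ) else 0) * ∏ x, bern p (g x))]
  have hpr : ∀ v : Fin d → Fin k → Bool,
      (∏ x : Fin k × Fin d, bern p (ψ v x)) = ∏ j : Fin d, ∏ l : Fin k, bern p (v j l) := by
    intro v
    rw [Fintype.prod_prod_type, Finset.prod_comm]
    apply Finset.prod_congr rfl; intro j _; apply Finset.prod_congr rfl; intro l _
    rw [hψ]
  have term : ∀ v : Fin d → Fin k → Bool,
      (if Orthog (fun l j => ψ v (l, j)) then (1:ℝ) else 0) * ∏ x : Fin k × Fin d, bern p (ψ v x)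
        = ∏ j : Fin d, ((if ∃ l, v j l = false then (1:ℝ) else 0) * ∏ l, bern p (v j l)) := by
    intro v
    by_cases h : ∀ j : Fin d, ∃ l : Fin k, v j l = false
    · have hO : Orthog (fun l j => ψ v (l, j)) := h
      rw [if_pos hO, one_mul, hpr]
      apply Finset.prod_congr rfl; intro j _
      rw [if_pos (h j), one_mul]
    · have hO : ¬ Orthog (fun l j => ψ v (l, j)) := h
      rw [if_neg hO, zero_mul]
      push_neg at h
      obtain ⟨j₀, hj₀⟩ := h
      symm
      apply Finset.prod_eq_zero (mem_univ j₀)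
      rw [if_neg (by simpa using hj₀), zero_mul]
  rw [Fintype.sum_congr _ _ term]
  calc ∑ v : Fin d → Fin k → Bool,
        ∏ j : Fin d, ((if ∃ l, v j l = false then (1:ℝ) else 0) * ∏ l, bern p (v j l))
      = ∑ v ∈ Fintype.piFinset (fun _ : Fin d => (univ : Finset (Fin k → Bool))),
        ∏ j : Fin d, ((if ∃ l, v j l = false then (1:ℝ) else 0) * ∏ l, bern p (v j l)) := by
        rw [Fintype.piFinset_univ]
    _ = ∏ _j : Fin d, ∑ c : Fin k → Bool,
          ((if ∃ l, c l = false then (1:ℝ) else 0) * ∏ l, bern p (c l)) :=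
        (Finset.prod_univ_sum (fun _ : Fin d => (univ : Finset (Fin k → Bool)))
          (fun _ c => (if ∃ l, c l = false then (1:ℝ) else 0) * ∏ l, bern p (c l))).symm
    _ = (1 - p ^ k) ^ d := by
        rw [Finset.prod_const, col_sum]
        simp


set_option maxHeartbeats 1000000 in
/-- An instance sampled from the model distribution `k-OV₀^α(n)` has no
solution with probability at least `1 - n^{-k}`; equivalently, the probability that some
tuple `(s_1,…,s_k)` is a solution is at most `n^{-k}`. -/
theorem stmt2 (k n : ℕ) (hk : 2 ≤ k) (hn : 2 ≤ n) (α : ℝ) (hα : 0 < α)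
    (d : ℕ) (hd : 0 < d) (hdα : (d : ℝ) = α * Real.logb 2 n)
    (p : ℝ) (hp : p = (1 - (2 : ℝ) ^ (-(2 * (k : ℝ)) / α)) ^ ((1 : ℝ) / k)) :
    1 - (n : ℝ) ^ (-(k : ℝ)) ≤
      (∑ U : Fin k → Fin n → Fin d → Bool,
        if ¬ ∃ s : Fin k → Fin n, Orthog (fun l => U l (s l)) then
          ∏ l : Fin k, ∏ i : Fin n, ∏ j : Fin d, bern p (U l i j)
        else 0) ∧
    (∑ U : Fin k → Fin n → Fin d → Bool,
        if ∃ s : Fin k → Fin n, Orthog (fun l => U l (s l)) then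
          ∏ l : Fin k, ∏ i : Fin n, ∏ j : Fin d, bern p (U l i j)
        else 0) ≤ (n : ℝ) ^ (-(k : ℝ)) := by
  classical
  have hn0 : (0:ℝ) < n := by positivity
  have hk0 : (k:ℝ) ≠ 0 := by
    have : 0 < k := by omega
    positivity
  set q : ℝ := (2:ℝ) ^ (-(2 * (k : ℝ)) / α) with hq
  have hq0 : 0 < q := Real.rpow_pos_of_pos (by norm_num) _
  have hexp : -(2 * (k:ℝ)) / α ≤ 0 := by
    apply div_nonpos_of_nonpos_of_nonneg
    · have : (0:ℝ) ≤ 2 * (k:ℝ) := by positivity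
      linarith
    · exact hα.le
  have hqle : q ≤ 1 := Real.rpow_le_one_of_one_le_of_nonpos (by norm_num) hexp
  have hbase0 : (0:ℝ) ≤ 1 - q := by linarith
  have hp0 : 0 ≤ p := by rw [hp]; exact Real.rpow_nonneg hbase0 _
  have hp1 : p ≤ 1 := by
    rw [hp]; exact Real.rpow_le_one hbase0 (by linarith) (by positivity)
  have hpk : 1 - p ^ k = q := by
    rw [hp, ← Real.rpow_natCast ((1 - q) ^ ((1:ℝ)/k)) k, ← Real.rpow_mul hbase0]
    rw [one_div, inv_mul_cancel₀ hk0, Real.rpow_one]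
    ring
  have hqd : q ^ d = (n:ℝ) ^ (-(2 * (k:ℝ))) := by
    rw [hq, ← Real.rpow_natCast ((2:ℝ) ^ (-(2 * (k:ℝ)) / α)) d,
      ← Real.rpow_mul (by norm_num : (0:ℝ) ≤ 2), hdα]
    have he : -(2 * (k:ℝ)) / α * (α * Real.logb 2 n) = Real.logb 2 n * (-(2 * (k:ℝ))) := by
      field_simp
    rw [he, Real.rpow_mul (by norm_num : (0:ℝ) ≤ 2),
      Real.rpow_logb (by norm_num) (by norm_num) hn0]
  have hfinal : ((n:ℝ) ^ k) * (1 - p ^ k) ^ d = (n:ℝ) ^ (-(k:ℝ)) := by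
    rw [hpk, hqd, ← Real.rpow_natCast (n:ℝ) k, ← Real.rpow_add hn0]
    congr 1
    ring
  set W : (Fin k → Fin n → Fin d → Bool) → ℝ :=
    fun U => ∏ l : Fin k, ∏ i : Fin n, ∏ j : Fin d, bern p (U l i j) with hWdef
  have hWnn : ∀ U, 0 ≤ W U := fun U =>
    Finset.prod_nonneg fun l _ => Finset.prod_nonneg fun i _ =>
      Finset.prod_nonneg fun j _ => bern_nonneg hp0 hp1 _
  let φ : ((Fin k × Fin n × Fin d) → Bool) ≃ (Fin k → Fin n → Fin d → Bool) :=
    (Equiv.curry _ _ _).trans (Equiv.piCongrRight fun _ => Equiv.curry _ _ _)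
  have hWφ : ∀ f, W (φ f) = ∏ x : Fin k × Fin n × Fin d, bern p (f x) := by
    intro f
    show (∏ l : Fin k, ∏ i : Fin n, ∏ j : Fin d, bern p (f (l, i, j))) = _
    rw [Fintype.prod_prod_type]
    exact Fintype.prod_congr _ _ fun l =>
      (Fintype.prod_prod_type (fun y : Fin n × Fin d => bern p (f (l, y)))).symm
  have htotal : ∑ U : Fin k → Fin n → Fin d → Bool, W U = 1 := by
    rw [← Equiv.sum_comp φ W, Fintype.sum_congr _ _ hWφ, sum_W]
  have hPs : ∀ s : Fin k → Fin n,
      (∑ U : Fin k → Fin n → Fin d → Bool,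
        if Orthog (fun l => U l (s l)) then W U else 0) = (1 - p ^ k) ^ d := by
    intro s
    set e : Fin k × Fin d → Fin k × Fin n × Fin d := fun z => (z.1, s z.1, z.2) with hedef
    have he : Function.Injective e := by
      rintro ⟨a, b⟩ ⟨a', b'⟩ h
      simp only [hedef, Prod.mk.injEq] at h
      obtain ⟨h1, _, h3⟩ := h
      simp [h1, h3]
    calc (∑ U : Fin k → Fin n → Fin d → Bool,
          if Orthog (fun l => U l (s l)) then W U else 0)
        = ∑ f : (Fin k × Fin n × Fin d) → Bool,
            (if Orthog (fun l => φ f l (s l)) then W (φ f) else 0) :=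
          (Equiv.sum_comp φ (fun U => if Orthog (fun l => U l (s l)) then W U else 0)).symm
      _ = ∑ f : (Fin k × Fin n × Fin d) → Bool,
            (if Orthog (fun l j => f (e (l, j))) then (1:ℝ) else 0)
              * ∏ x : Fin k × Fin n × Fin d, bern p (f x) := by
          apply Fintype.sum_congr
          intro f
          rw [ind_mul, hWφ f]
          exact if_congr Iff.rfl rfl rfl
      _ = ∑ g : Fin k × Fin d → Bool,
            (if Orthog (fun l j => g (l, j)) then (1:ℝ) else 0)
              * ∏ x : Fin k × Fin d, bern p (g x) :=
          marginal p e he (fun g => if Orthog (fun l j => g (l, j)) then (1:ℝ) else 0)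
      _ = (1 - p ^ k) ^ d := orthog_prob p k d
  have hS2 : (∑ U : Fin k → Fin n → Fin d → Bool,
      if ∃ s : Fin k → Fin n, Orthog (fun l => U l (s l)) then W U else 0)
      ≤ (n:ℝ) ^ (-(k:ℝ)) := by
    have hub : ∀ U : Fin k → Fin n → Fin d → Bool,
        (if ∃ s : Fin k → Fin n, Orthog (fun l => U l (s l)) then W U else 0)
          ≤ ∑ s : Fin k → Fin n, if Orthog (fun l => U l (s l)) then W U else 0 := by
      intro U
      by_cases hc : ∃ s : Fin k → Fin n, Orthog (fun l => U l (s l))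
      · rw [if_pos hc]
        obtain ⟨s₀, hs₀⟩ := hc
        have hnn : ∀ s ∈ (univ : Finset (Fin k → Fin n)),
            0 ≤ if Orthog (fun l => U l (s l)) then W U else 0 := by
          intro s _; split_ifs; exacts [hWnn U, le_refl 0]
        have := Finset.single_le_sum hnn (mem_univ s₀)
        rwa [if_pos hs₀] at this
      · rw [if_neg hc]
        apply Finset.sum_nonneg; intro s _; split_ifs; exacts [hWnn U, le_refl 0]
    calc (∑ U : Fin k → Fin n → Fin d → Bool,
          if ∃ s : Fin k → Fin n, Orthog (fun l => U l (s l)) then W U else 0)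
        ≤ ∑ U : Fin k → Fin n → Fin d → Bool, ∑ s : Fin k → Fin n,
            if Orthog (fun l => U l (s l)) then W U else 0 :=
          Finset.sum_le_sum fun U _ => hub U
      _ = ∑ s : Fin k → Fin n, ∑ U : Fin k → Fin n → Fin d → Bool,
            if Orthog (fun l => U l (s l)) then W U else 0 := Finset.sum_comm
      _ = ∑ _s : Fin k → Fin n, (1 - p ^ k) ^ d := Fintype.sum_congr _ _ hPs
      _ = (Fintype.card (Fin k → Fin n) : ℝ) * (1 - p ^ k) ^ d := by
          rw [Finset.sum_const, Finset.card_univ, nsmul_eq_mul]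
      _ = ((n:ℝ) ^ k) * (1 - p ^ k) ^ d := by
          congr 1
          rw [Fintype.card_fun]
          simp
      _ = (n:ℝ) ^ (-(k:ℝ)) := hfinal
  have hsplit : (∑ U : Fin k → Fin n → Fin d → Bool,
        if ¬ ∃ s : Fin k → Fin n, Orthog (fun l => U l (s l)) then W U else 0)
      + (∑ U : Fin k → Fin n → Fin d → Bool,
        if ∃ s : Fin k → Fin n, Orthog (fun l => U l (s l)) then W U else 0) = 1 := by
    rw [← Finset.sum_add_distrib, ← htotal]
    apply Fintype.sum_congr
    intro U
    by_cases h : ∃ s : Fin k → Fin n, Orthog (fun l => U l (s l)) <;> simp [h]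
  have hS1 : 1 - (n:ℝ) ^ (-(k:ℝ)) ≤ (∑ U : Fin k → Fin n → Fin d → Bool,
      if ¬ ∃ s : Fin k → Fin n, Orthog (fun l => U l (s l)) then W U else 0) := by
    linarith
  exact ⟨hS1, hS2⟩
end

section
/- Fix an integer k ≥ 2 and p ∈ (0, 1/2]. Let Y ∈ {0,1}^k be the output of the per-coordinate planting process with parameters k and p. Then for every x ∈ {0,1}^k, writing m for the number of ones in x, Pr[Y = x] = p^m (1−p)^{k−m} − (−1)^{k−m} p^k. -/
open Finset

/-- The number of ones in a bit string. -/
def ones {k : ℕ} (x : Fin k → Bool) : ℕ := (Finset.univ.filter fun i => x i = true).card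

/-- Flipping the last bit of a bit string. -/
def flipLast {k : ℕ} (x : Fin k → Bool) : Fin k → Bool :=
  fun i => if (i : ℕ) = k - 1 then !(x i) else x i

/-- The transition kernel of the per-coordinate planting process: given the sampled string
`x` with `m` ones, if `k - m` is even the last bit is flipped with probability
`(p/(1-p))^(k-m)`; otherwise `x` is kept. `plantTrans k p x y` is the probability of
outputting `y` given that `x` was sampled. -/
noncomputable def plantTrans (k : ℕ) (p : ℝ) (x y : Fin k → Bool) : ℝ :=
  if Even (k - ones x) then
    (if y = flipLast x then (p / (1 - p)) ^ (k - ones x) else 0) +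
      (if y = x then 1 - (p / (1 - p)) ^ (k - ones x) else 0)
  else if y = x then 1 else 0

/-- The output distribution of the per-coordinate planting process with parameters `k`, `p`:
first sample `k` i.i.d. `p`-biased bits, then apply the flipping step. -/
noncomputable def plantPMF (k : ℕ) (p : ℝ) (y : Fin k → Bool) : ℝ :=
  ∑ x : Fin k → Bool, (∏ i : Fin k, bern p (x i)) * plantTrans k p x y

lemma ones_le {k : ℕ} (x : Fin k → Bool) : ones x ≤ k := by
  classical
  have := Finset.card_filter_le (Finset.univ : Finset (Fin k)) (fun i => x i = true)
  simpa [ones] using this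

lemma prod_bern {k : ℕ} (p : ℝ) (x : Fin k → Bool) :
    (∏ i : Fin k, bern p (x i)) = p ^ ones x * (1 - p) ^ (k - ones x) := by
  classical
  rw [← Finset.prod_filter_mul_prod_filter_not Finset.univ (fun i => x i = true)]
  have h1 : ∀ i ∈ Finset.univ.filter (fun i => x i = true), bern p (x i) = p := by
    intro i hi; simp only [Finset.mem_filter] at hi; simp [bern, hi.2]
  have h2 : ∀ i ∈ Finset.univ.filter (fun i => ¬ x i = true), bern p (x i) = 1 - p := by
    intro i hi; simp only [Finset.mem_filter] at hi
    have : x i = false := by simpa using hi.2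
    simp [bern, this]
  rw [Finset.prod_congr rfl h1, Finset.prod_congr rfl h2, Finset.prod_const, Finset.prod_const]
  have hc : (Finset.univ.filter (fun i => ¬ x i = true)).card = k - ones x := by
    have := Finset.card_filter_add_card_filter_not
      (s := (Finset.univ : Finset (Fin k))) (p := fun i => x i = true)
    simp only [Finset.card_univ, Fintype.card_fin] at this
    unfold ones; omega
  rw [hc]; rfl

lemma flipLast_flipLast {k : ℕ} (x : Fin k → Bool) : flipLast (flipLast x) = x := by
  funext i
  by_cases h : (i : ℕ) = k - 1 <;> simp [flipLast, h]

lemma flipLast_ne {k : ℕ} (hk : 1 ≤ k) (x : Fin k → Bool) : flipLast x ≠ x := by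
  intro h
  have hj : k - 1 < k := by omega
  have := congrFun h ⟨k - 1, hj⟩
  simp [flipLast] at this

lemma ones_flipLast {k : ℕ} (hk : 1 ≤ k) (x : Fin k → Bool) :
    (x ⟨k-1, by omega⟩ = true ∧ 1 ≤ ones x ∧ ones (flipLast x) = ones x - 1) ∨
    (x ⟨k-1, by omega⟩ = false ∧ ones x < k ∧ ones (flipLast x) = ones x + 1) := by
  classical
  set j : Fin k := ⟨k-1, by omega⟩ with hjdef
  have hiff : ∀ i : Fin k, ((i : ℕ) = k - 1) ↔ i = j := by
    intro i; constructor
    · intro h; exact Fin.ext h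
    · intro h; rw [h]
  by_cases hj : x j = true
  · left
    refine ⟨hj, ?_, ?_⟩
    · have : j ∈ Finset.univ.filter (fun i => x i = true) := by simp [hj]
      have := Finset.card_pos.mpr ⟨j, this⟩
      simpa [ones] using this
    · have hset : Finset.univ.filter (fun i => flipLast x i = true)
          = (Finset.univ.filter (fun i => x i = true)).erase j := by
        ext i
        by_cases h : i = j
        · subst h; simp [flipLast, hiff, hj]
        · simp [flipLast, hiff, h]
      have hjmem : j ∈ Finset.univ.filter (fun i => x i = true) := by simp [hj]
      unfold ones
      rw [hset, Finset.card_erase_of_mem hjmem]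
  · right
    have hj' : x j = false := by simpa using hj
    refine ⟨hj', ?_, ?_⟩
    · have : Finset.univ.filter (fun i => x i = true) ⊂ Finset.univ := by
        refine Finset.ssubset_univ_iff.mpr ?_
        intro h
        have : j ∈ Finset.univ.filter (fun i => x i = true) := by rw [h]; simp
        simp [hj'] at this
      have := Finset.card_lt_card this
      simpa [ones, Finset.card_univ] using this
    · have hset : Finset.univ.filter (fun i => flipLast x i = true)
          = insert j (Finset.univ.filter (fun i => x i = true)) := by
        ext i
        by_cases h : i = j
        · subst h; simp [flipLast, hiff, hj']
        · simp [flipLast, hiff, h]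
      have hjnmem : j ∉ Finset.univ.filter (fun i => x i = true) := by simp [hj']
      unfold ones
      rw [hset, Finset.card_insert_of_notMem hjnmem]

/-- The output `Y` of the per-coordinate planting process satisfies
`Pr[Y = x] = p^m (1-p)^{k-m} - (-1)^{k-m} p^k`, where `m` is the number of ones in `x`. -/
theorem stmt5 (k : ℕ) (hk : 2 ≤ k) (p : ℝ) (hp0 : 0 < p) (hp2 : p ≤ 1 / 2)
    (x : Fin k → Bool) :
    plantPMF k p x
      = p ^ ones x * (1 - p) ^ (k - ones x) - (-1 : ℝ) ^ (k - ones x) * p ^ k := by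
  classical
  have hk1 : 1 ≤ k := by omega
  have hq : (1 : ℝ) - p ≠ 0 := by nlinarith
  have hne : flipLast x ≠ x := flipLast_ne hk1 x
  set f : (Fin k → Bool) → ℝ :=
    fun z => (∏ i : Fin k, bern p (z i)) * plantTrans k p z x with hf
  -- reduce the sum to two terms
  have hsum : plantPMF k p x = f x + f (flipLast x) := by
    have hsub : ({x, flipLast x} : Finset (Fin k → Bool)) ⊆ Finset.univ :=
      Finset.subset_univ _
    have hzero : ∀ z ∈ Finset.univ, z ∉ ({x, flipLast x} : Finset (Fin k → Bool)) → f z = 0 := by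
      intro z _ hz
      simp only [Finset.mem_insert, Finset.mem_singleton] at hz
      push_neg at hz
      have h1 : x ≠ z := fun h => hz.1 h.symm
      have h2 : x ≠ flipLast z := by
        intro h
        apply hz.2
        rw [h, flipLast_flipLast]
      simp [hf, plantTrans, h1, h2]
    have := Finset.sum_subset hsub hzero
    rw [plantPMF, ← this, Finset.sum_pair (Ne.symm hne)]
  rw [hsum]
  -- key algebra fact
  have key : ∀ a b : ℕ, (p ^ a * (1 - p) ^ b) * (p / (1 - p)) ^ b = p ^ (a + b) := by
    intro a b
    rw [div_pow, pow_add]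
    field_simp
  set m := ones x with hm
  have hmk : m ≤ k := ones_le x
  by_cases hEv : Even (k - m)
  · -- even case: f (flipLast x) = 0
    have hpar : ¬ Even (k - ones (flipLast x)) := by
      rcases ones_flipLast hk1 x with ⟨_, h1, h2⟩ | ⟨_, h1, h2⟩ <;>
        rw [h2] <;> rw [Nat.even_iff] at hEv ⊢ <;> omega
    have hf2 : f (flipLast x) = 0 := by
      have hne' : x ≠ flipLast x := Ne.symm hne
      simp [hf, plantTrans, hpar, hne']
    have hf1 : f x = p ^ m * (1 - p) ^ (k - m) * (1 - (p / (1 - p)) ^ (k - m)) := by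
      have hne'' : x ≠ flipLast x := Ne.symm hne
      have hEv' : Even (k - ones x) := hEv
      rw [hm]
      simp [hf, plantTrans, hEv', hne'', prod_bern]
    rw [hf1, hf2, add_zero, Even.neg_one_pow hEv, one_mul, mul_sub, mul_one,
      key m (k - m)]
    congr 2
    omega
  · -- odd case: f x = weight x, f (flipLast x) = p ^ k
    have hf1 : f x = p ^ m * (1 - p) ^ (k - m) := by
      have hEv' : ¬ Even (k - ones x) := hEv
      rw [hm]
      simp [hf, plantTrans, hEv', prod_bern]
    have hf2 : f (flipLast x) = p ^ k := by
      have hxval : x = flipLast (flipLast x) := (flipLast_flipLast x).symm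
      rcases ones_flipLast hk1 x with ⟨_, h1, h2⟩ | ⟨_, h1, h2⟩ <;>
      · have hpar : Even (k - ones (flipLast x)) := by
          rw [h2] ; rw [Nat.even_iff] at hEv ⊢; omega
        have hxne : x ≠ flipLast x := Ne.symm hne
        show (∏ i : Fin k, bern p (flipLast x i)) * plantTrans k p (flipLast x) x = p ^ k
        rw [prod_bern]
        simp only [plantTrans, hpar, if_pos, ← hxval, if_true, hxne, if_neg, if_false]
        rw [add_zero, key]
        congr 1
        rw [h2]; omega
    rw [hf1, hf2]
    have hodd : Odd (k - m) := Nat.odd_iff.mpr (by rw [Nat.even_iff] at hEv; omega)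
    rw [Odd.neg_one_pow hodd]
    ring
end

section
/- Fix an integer k ≥ 2 and p ∈ (0, 1/2]. The function P_k : {0,1}^k → ℝ defined by P_k(x) = p^m (1−p)^{k−m} − (−1)^{k−m} p^k (where m is the number of ones in x) is a probability mass function: P_k(x) ≥ 0 for every x ∈ {0,1}^k, and the sum of P_k(x) over all x ∈ {0,1}^k equals 1. -/
open Finset

/-- The planted per-coordinate distribution
`P_k(x) = p^m (1-p)^{k-m} - (-1)^{k-m} p^k`, where `m` is the number of ones in `x`. -/
noncomputable def Pk (k : ℕ) (p : ℝ) (x : Fin k → Bool) : ℝ :=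
  p ^ ones x * (1 - p) ^ (k - ones x) - (-1 : ℝ) ^ (k - ones x) * p ^ k

lemma prod_if {k : ℕ} (a b : ℝ) (x : Fin k → Bool) :
    (∏ i : Fin k, (if x i then a else b)) = a ^ ones x * b ^ (k - ones x) := by
  classical
  rw [← Finset.prod_filter_mul_prod_filter_not Finset.univ (fun i => x i = true)]
  have h1 : (∏ i ∈ Finset.univ.filter (fun i => x i = true), (if x i then a else b))
      = a ^ ones x := by
    rw [Finset.prod_congr rfl (fun i hi => ?_), Finset.prod_const, ones]
    simp only [Finset.mem_filter] at hi
    simp [hi.2]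
  have h2 : (∏ i ∈ Finset.univ.filter (fun i => ¬ (x i = true)), (if x i then a else b))
      = b ^ (k - ones x) := by
    rw [Finset.prod_congr rfl (fun i hi => ?_), Finset.prod_const]
    · congr 1
      have := Finset.card_filter_add_card_filter_not
        (s := (Finset.univ : Finset (Fin k))) (p := fun i => x i = true)
      simp only [Finset.card_univ, Fintype.card_fin] at this
      unfold ones
      omega
    · simp only [Finset.mem_filter] at hi
      simp [hi.2]
  rw [h1, h2]

lemma sum_prod_if {k : ℕ} (a b : ℝ) :
    (∑ x : Fin k → Bool, ∏ i : Fin k, (if x i then a else b)) = (a + b) ^ k := by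
  classical
  have := Finset.prod_univ_sum (fun _ : Fin k => (Finset.univ : Finset Bool))
    (fun _ : Fin k => fun c : Bool => if c then a else b)
  simp only [Fintype.piFinset_univ] at this
  rw [← this]
  simp [Fintype.sum_bool]

/-- For `k ≥ 2` and `p ∈ (0, 1/2]`, the function `P_k` is a probability mass
function: it is nonnegative and sums to `1` over `{0,1}^k`. -/
theorem stmt6 (k : ℕ) (hk : 2 ≤ k) (p : ℝ) (hp0 : 0 < p) (hp2 : p ≤ 1 / 2) :
    (∀ x : Fin k → Bool, 0 ≤ Pk k p x) ∧ (∑ x : Fin k → Bool, Pk k p x) = 1 := by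
  have hp1 : p ≤ 1 - p := by linarith
  constructor
  · intro x
    have hm := ones_le x
    have h1 : p ^ k ≤ p ^ ones x * (1 - p) ^ (k - ones x) := by
      calc p ^ k = p ^ ones x * p ^ (k - ones x) := by
            rw [← pow_add]; congr 1; omega
        _ ≤ p ^ ones x * (1 - p) ^ (k - ones x) := by
            apply mul_le_mul_of_nonneg_left _ (by positivity)
            exact pow_le_pow_left₀ hp0.le hp1 _
    have h2 : (-1 : ℝ) ^ (k - ones x) * p ^ k ≤ p ^ k := by
      rcases Nat.even_or_odd (k - ones x) with he | ho
      · rw [he.neg_one_pow, one_mul]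
      · rw [ho.neg_one_pow]
        nlinarith [pow_pos hp0 k]
    unfold Pk
    linarith
  · have key : ∀ x : Fin k → Bool, Pk k p x =
        (∏ i : Fin k, (if x i then p else 1 - p)) - (∏ i : Fin k, (if x i then p else -p)) := by
      intro x
      have hm := ones_le x
      have h3 : p ^ ones x * (-p) ^ (k - ones x) = (-1 : ℝ) ^ (k - ones x) * p ^ k := by
        rw [neg_pow, mul_comm ((-1 : ℝ) ^ (k - ones x)), ← mul_assoc, ← pow_add,
          Nat.add_sub_cancel' hm, mul_comm]
      rw [prod_if, prod_if, Pk, h3]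
    rw [Finset.sum_congr rfl (fun x _ => key x), Finset.sum_sub_distrib,
      sum_prod_if, sum_prod_if]
    have hk0 : k ≠ 0 := by omega
    simp [hk0]
end

section
/- Fix an integer k ≥ 2, an integer n ≥ 2, a real α > 0 such that d = α log₂ n is a positive integer, let p = (1 − 2^{−2k/α})^{1/k}, and assume p ≤ 1/2. For an instance (U_1,…,U_k) sampled from the planted distribution with any fixed locations s = (s_1,…,s_k) ∈ {1,…,n}^k, the probability that the instance has more than one solution (i.e., some solution other than s) is less than n^{−k}. -/
open Finset

/-- The probability of an instance `U` under the planted distribution with locations `s`: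
the `d` coordinates of the tuple of planted vectors `(U_{1,s_1},…,U_{k,s_k})` are i.i.d.
according to `P_k`, and all entries of all other vectors are i.i.d. `p`-biased. -/
noncomputable def plantedWeight (k n d : ℕ) (p : ℝ) (s : Fin k → Fin n)
    (U : Fin k → Fin n → Fin d → Bool) : ℝ :=
  (∏ j : Fin d, Pk k p (fun l => U l (s l) j)) *
    ∏ l : Fin k, ∏ i ∈ Finset.univ.filter (fun i : Fin n => i ≠ s l),
      ∏ j : Fin d, bern p (U l i j)

noncomputable def sgn : Bool → ℝ := fun b => if b then 1 else -1
noncomputable def ind : Bool → ℝ := fun b => if b then 1 else 0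

lemma sum_fn_prod {ι β : Type*} [Fintype ι] [DecidableEq ι] [Fintype β] (f : ι → β → ℝ) :
    ∑ v : ι → β, ∏ i, f i (v i) = ∏ i, ∑ b, f i b :=
  (Fintype.prod_sum f).symm

lemma card_not {k : ℕ} (x : Fin k → Bool) :
    (univ.filter fun l => ¬ (x l = true)).card = k - ones x := by
  classical
  have h := Finset.card_filter_add_card_filter_not
    (s := (univ : Finset (Fin k))) (p := fun l => x l = true)
  simp only [Finset.card_univ, Fintype.card_fin] at h
  unfold ones
  omega

lemma prod_ite_bool {k : ℕ} (x : Fin k → Bool) (a b : ℝ) :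
    ∏ l, (if x l then a else b) = a ^ ones x * b ^ (k - ones x) := by
  classical
  rw [Finset.prod_ite (fun _ => a) (fun _ => b), Finset.prod_const, Finset.prod_const,
    card_not]
  rfl

lemma Pk_expand (k : ℕ) (p : ℝ) (x : Fin k → Bool) :
    Pk k p x = (∏ l, bern p (x l)) - p ^ k * ∏ l, sgn (x l) := by
  unfold Pk bern sgn
  rw [prod_ite_bool, prod_ite_bool]
  ring

lemma Pk_nonneg {k : ℕ} {p : ℝ} (hp0 : 0 ≤ p) (hp2 : p ≤ 1 / 2) (x : Fin k → Bool) :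
    0 ≤ Pk k p x := by
  have hm := ones_le x
  have hpk : (0:ℝ) ≤ p ^ k := pow_nonneg hp0 k
  have h1 : (-1 : ℝ) ^ (k - ones x) * p ^ k ≤ p ^ k := by
    rcases Nat.even_or_odd (k - ones x) with h | h
    · rw [h.neg_one_pow]; linarith
    · rw [h.neg_one_pow]; nlinarith
  have h2 : p ^ k ≤ p ^ ones x * (1 - p) ^ (k - ones x) := by
    have : p ^ k = p ^ ones x * p ^ (k - ones x) := by
      rw [← pow_add]; congr 1; omega
    rw [this]
    exact mul_le_mul_of_nonneg_left
      (pow_le_pow_left₀ hp0 (by linarith) _) (pow_nonneg hp0 _)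
  unfold Pk; linarith

-- per-l computations
lemma sum_bern_prod {n : ℕ} (p : ℝ) (a : Fin n) :
    ∑ v : Fin n → Bool, bern p (v a) * ∏ i ∈ univ.erase a, bern p (v i) = 1 := by
  classical
  have h : ∀ v : Fin n → Bool,
      bern p (v a) * ∏ i ∈ univ.erase a, bern p (v i) = ∏ i, bern p (v i) :=
    fun v => Finset.mul_prod_erase univ (fun i => bern p (v i)) (mem_univ a)
  rw [Finset.sum_congr rfl fun v _ => h v, sum_fn_prod fun _ b => bern p b]
  simp [bern]

lemma sum_sgn_prod {n : ℕ} (p : ℝ) (a : Fin n) :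
    ∑ v : Fin n → Bool, sgn (v a) * ∏ i ∈ univ.erase a, bern p (v i) = 0 := by
  classical
  set f : Fin n → Bool → ℝ := fun i b => if i = a then sgn b else bern p b with hf
  have h : ∀ v : Fin n → Bool,
      sgn (v a) * ∏ i ∈ univ.erase a, bern p (v i) = ∏ i, f i (v i) := by
    intro v
    rw [← Finset.mul_prod_erase univ (fun i => f i (v i)) (mem_univ a)]
    congr 1
    · simp [hf]
    · exact Finset.prod_congr rfl fun i hi => by simp [hf, (Finset.mem_erase.mp hi).1]
  rw [Finset.sum_congr rfl fun v _ => h v, sum_fn_prod]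
  refine Finset.prod_eq_zero (mem_univ a) ?_
  simp [hf, sgn]

lemma sum_ind_bern_prod {n : ℕ} (p : ℝ) (a b : Fin n) :
    ∑ v : Fin n → Bool, ind (v b) * (bern p (v a) * ∏ i ∈ univ.erase a, bern p (v i)) = p := by
  classical
  set f : Fin n → Bool → ℝ := fun i c => (if i = b then ind c else 1) * bern p c with hf
  have h : ∀ v : Fin n → Bool,
      ind (v b) * (bern p (v a) * ∏ i ∈ univ.erase a, bern p (v i)) = ∏ i, f i (v i) := by
    intro v
    rw [hf, Finset.prod_mul_distrib, Finset.prod_ite_eq' univ b (fun i => ind (v i)),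
      ← Finset.mul_prod_erase univ (fun i => bern p (v i)) (mem_univ a)]
    simp
  rw [Finset.sum_congr rfl fun v _ => h v, sum_fn_prod]
  have h2 : ∀ i, (∑ c : Bool, f i c) = if i = b then p else 1 := by
    intro i
    by_cases hi : i = b <;> simp [hf, hi, ind, bern] <;> ring_nf
  rw [Finset.prod_congr rfl fun i _ => h2 i, Finset.prod_ite_eq' univ b fun _ => p]
  simp

lemma sum_ind_sgn_prod {n : ℕ} (p : ℝ) (a b : Fin n) (hab : a ≠ b) :
    ∑ v : Fin n → Bool, ind (v b) * (sgn (v a) * ∏ i ∈ univ.erase a, bern p (v i)) = 0 := by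
  classical
  set f : Fin n → Bool → ℝ := fun i c =>
    (if i = b then ind c else 1) * (if i = a then sgn c else bern p c) with hf
  have h : ∀ v : Fin n → Bool,
      ind (v b) * (sgn (v a) * ∏ i ∈ univ.erase a, bern p (v i)) = ∏ i, f i (v i) := by
    intro v
    rw [hf, Finset.prod_mul_distrib, Finset.prod_ite_eq' univ b (fun i => ind (v i))]
    have h3 : ∏ i, (if i = a then sgn (v i) else bern p (v i))
        = sgn (v a) * ∏ i ∈ univ.erase a, bern p (v i) := by
      rw [← Finset.mul_prod_erase univ (fun i => if i = a then sgn (v i) else bern p (v i))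
        (mem_univ a)]
      congr 1
      · simp
      · exact Finset.prod_congr rfl fun i hi => by simp [(Finset.mem_erase.mp hi).1]
    rw [h3]
    simp
  rw [Finset.sum_congr rfl fun v _ => h v, sum_fn_prod]
  refine Finset.prod_eq_zero (mem_univ a) ?_
  simp [hf, hab, sgn]

lemma percoord {k n : ℕ} (hk : k ≠ 0) (p : ℝ) (s t : Fin k → Fin n)
    (l0 : Fin k) (hl0 : t l0 ≠ s l0) :
    ∑ V : Fin k → Fin n → Bool,
      (if ∃ l, V l (t l) = false then
        Pk k p (fun l => V l (s l)) *
          ∏ l, ∏ i ∈ univ.filter (fun i : Fin n => i ≠ s l), bern p (V l i)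
      else 0) = 1 - p ^ k := by
  classical
  simp only [Finset.filter_ne']
  set w : (Fin k → Fin n → Bool) → ℝ := fun V =>
    Pk k p (fun l => V l (s l)) * ∏ l, ∏ i ∈ univ.erase (s l), bern p (V l i) with hw
  -- remove the if
  have hite : ∀ V : Fin k → Fin n → Bool,
      (if ∃ l, V l (t l) = false then w V else 0)
        = w V - (∏ l, ind (V l (t l))) * w V := by
    intro V
    by_cases h : ∃ l, V l (t l) = false
    · obtain ⟨l, hl⟩ := h
      rw [if_pos ⟨l, hl⟩, Finset.prod_eq_zero (mem_univ l) (by simp [ind, hl])]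
      ring
    · rw [if_neg h]
      push_neg at h
      have hall : ∀ l, V l (t l) = true := by
        intro l
        cases hb : V l (t l)
        · exact absurd hb (h l)
        · rfl
      rw [Finset.prod_eq_one fun l _ => by simp [ind, hall l]]
      ring
  rw [Finset.sum_congr rfl fun V _ => hite V, Finset.sum_sub_distrib]
  -- expansion of w into two product-over-l forms
  have hwexp : ∀ V : Fin k → Fin n → Bool,
      w V = (∏ l, (bern p (V l (s l)) * ∏ i ∈ univ.erase (s l), bern p (V l i)))
        - p ^ k * ∏ l, (sgn (V l (s l)) * ∏ i ∈ univ.erase (s l), bern p (V l i)) := by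
    intro V
    rw [hw]
    simp only []
    rw [Pk_expand, sub_mul, Finset.prod_mul_distrib, Finset.prod_mul_distrib, mul_assoc]
  have hC1 : ∑ V : Fin k → Fin n → Bool, w V = 1 := by
    rw [Finset.sum_congr rfl fun V _ => hwexp V, Finset.sum_sub_distrib, ← Finset.mul_sum,
      sum_fn_prod fun l (v : Fin n → Bool) =>
        bern p (v (s l)) * ∏ i ∈ univ.erase (s l), bern p (v i),
      sum_fn_prod fun l (v : Fin n → Bool) =>
        sgn (v (s l)) * ∏ i ∈ univ.erase (s l), bern p (v i)]
    rw [Finset.prod_congr rfl fun l _ => sum_bern_prod p (s l),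
      Finset.prod_congr rfl fun l _ => sum_sgn_prod p (s l)]
    rw [Finset.prod_const, Finset.prod_const]
    simp [zero_pow hk]
  have hC2 : ∑ V : Fin k → Fin n → Bool, (∏ l, ind (V l (t l))) * w V = p ^ k := by
    have hint : ∀ V : Fin k → Fin n → Bool,
        (∏ l, ind (V l (t l))) * w V
          = (∏ l, (ind (V l (t l)) * (bern p (V l (s l)) * ∏ i ∈ univ.erase (s l), bern p (V l i))))
            - p ^ k * ∏ l, (ind (V l (t l)) * (sgn (V l (s l)) * ∏ i ∈ univ.erase (s l), bern p (V l i))) := by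
      intro V
      rw [hwexp V, mul_sub, ← Finset.prod_mul_distrib, mul_left_comm, ← Finset.prod_mul_distrib]
    rw [Finset.sum_congr rfl fun V _ => hint V, Finset.sum_sub_distrib, ← Finset.mul_sum,
      sum_fn_prod fun l (v : Fin n → Bool) =>
        ind (v (t l)) * (bern p (v (s l)) * ∏ i ∈ univ.erase (s l), bern p (v i)),
      sum_fn_prod fun l (v : Fin n → Bool) =>
        ind (v (t l)) * (sgn (v (s l)) * ∏ i ∈ univ.erase (s l), bern p (v i))]
    rw [Finset.prod_congr rfl fun l _ => sum_ind_bern_prod p (s l) (t l),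
      Finset.prod_eq_zero (f := fun l => ∑ v : Fin n → Bool,
        ind (v (t l)) * (sgn (v (s l)) * ∏ i ∈ univ.erase (s l), bern p (v i)))
        (mem_univ l0) (sum_ind_sgn_prod p (s l0) (t l0) (Ne.symm hl0)),
      Finset.prod_const]
    simp
  rw [hC1, hC2]

lemma per_t {k n d : ℕ} (hk : k ≠ 0) (p : ℝ) (s t : Fin k → Fin n) (hts : t ≠ s) :
    ∑ U : Fin k → Fin n → Fin d → Bool,
      (if Orthog (fun l => U l (t l)) then plantedWeight k n d p s U else 0)
      = (1 - p ^ k) ^ d := by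
  classical
  obtain ⟨l0, hl0⟩ : ∃ l, t l ≠ s l := by
    by_contra h; push_neg at h; exact hts (funext h)
  have hsummand : ∀ U : Fin k → Fin n → Fin d → Bool,
      (if Orthog (fun l => U l (t l)) then plantedWeight k n d p s U else 0)
        = ∏ j : Fin d, (if ∃ l, U l (t l) j = false then
            Pk k p (fun l => U l (s l) j) *
              ∏ l, ∏ i ∈ univ.filter (fun i : Fin n => i ≠ s l), bern p (U l i j)
          else 0) := by
    intro U
    have hw : plantedWeight k n d p s U = ∏ j : Fin d,
        (Pk k p (fun l => U l (s l) j) *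
          ∏ l, ∏ i ∈ univ.filter (fun i : Fin n => i ≠ s l), bern p (U l i j)) := by
      unfold plantedWeight
      rw [Finset.prod_mul_distrib]
      congr 1
      rw [Finset.prod_congr rfl fun l _ => Finset.prod_comm, Finset.prod_comm]
    by_cases h : Orthog (fun l => U l (t l))
    · rw [if_pos h, hw]
      exact Finset.prod_congr rfl fun j _ => (if_pos (h j)).symm
    · rw [if_neg h]
      unfold Orthog at h
      push_neg at h
      obtain ⟨j0, hj0⟩ := h
      refine (Finset.prod_eq_zero (mem_univ j0) ?_).symm
      rw [if_neg]
      rintro ⟨l, hl⟩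
      exact hj0 l hl
  rw [Finset.sum_congr rfl fun U _ => hsummand U]
  let e : (Fin d → (Fin k → Fin n → Bool)) ≃ (Fin k → Fin n → Fin d → Bool) :=
    ⟨fun W l i j => W j l i, fun U j l i => U l i j, fun _ => rfl, fun _ => rfl⟩
  rw [← Equiv.sum_comp e]
  have key := sum_fn_prod (ι := Fin d) (β := Fin k → Fin n → Bool)
    (fun _ V => if ∃ l, V l (t l) = false then
        Pk k p (fun l => V l (s l)) *
          ∏ l, ∏ i ∈ univ.filter (fun i : Fin n => i ≠ s l), bern p (V l i)
      else 0)
  refine key.trans ?_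
  rw [Finset.prod_congr rfl fun (j : Fin d) _ => percoord hk p s t l0 hl0,
    Finset.prod_const]
  simp


/-- For an instance sampled from the planted distribution with any fixed
locations `s`, the probability that the instance has more than one solution (i.e. some
solution other than `s`) is less than `n^{-k}`. -/
theorem stmt11 (k n : ℕ) (hk : 2 ≤ k) (hn : 2 ≤ n) (α : ℝ) (hα : 0 < α)
    (d : ℕ) (hd : 0 < d) (hdα : (d : ℝ) = α * Real.logb 2 n)
    (p : ℝ) (hp : p = (1 - (2 : ℝ) ^ (-(2 * (k : ℝ)) / α)) ^ ((1 : ℝ) / k))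
    (hp2 : p ≤ 1 / 2) (s : Fin k → Fin n) :
    (∑ U : Fin k → Fin n → Fin d → Bool,
        if ∃ t : Fin k → Fin n, t ≠ s ∧ Orthog (fun l => U l (t l)) then
          plantedWeight k n d p s U
        else 0) < (n : ℝ) ^ (-(k : ℝ)) := by
  classical
  have hk0 : k ≠ 0 := by omega
  have hn0 : (0:ℝ) < (n:ℝ) := by exact_mod_cast Nat.lt_of_lt_of_le Nat.zero_lt_two hn
  have hkR : (0:ℝ) < (k:ℝ) := by exact_mod_cast Nat.lt_of_lt_of_le Nat.zero_lt_two hk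
  have hb0 : (0:ℝ) ≤ 1 - (2:ℝ) ^ (-(2 * (k:ℝ)) / α) := by
    have h1 : (2:ℝ) ^ (-(2 * (k:ℝ)) / α) ≤ 1 :=
      Real.rpow_le_one_of_one_le_of_nonpos one_le_two
        (div_nonpos_of_nonpos_of_nonneg (by linarith) hα.le)
    linarith
  have hp0 : 0 ≤ p := hp ▸ Real.rpow_nonneg hb0 _
  have hbern : ∀ b, 0 ≤ bern p b := by
    intro b; cases b <;> simp [bern] <;> linarith
  have hwpos : ∀ U, 0 ≤ plantedWeight k n d p s U := by
    intro U; unfold plantedWeight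
    refine mul_nonneg (Finset.prod_nonneg fun j _ => Pk_nonneg hp0 hp2 _)
      (Finset.prod_nonneg fun l _ => Finset.prod_nonneg fun i _ =>
        Finset.prod_nonneg fun j _ => hbern _)
  -- union bound
  have hub : (∑ U : Fin k → Fin n → Fin d → Bool,
        if ∃ t : Fin k → Fin n, t ≠ s ∧ Orthog (fun l => U l (t l)) then
          plantedWeight k n d p s U else 0)
      ≤ ∑ t ∈ univ.filter (fun t : Fin k → Fin n => t ≠ s),
          ∑ U : Fin k → Fin n → Fin d → Bool,
            (if Orthog (fun l => U l (t l)) then plantedWeight k n d p s U else 0) := by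
    rw [Finset.sum_comm]
    refine Finset.sum_le_sum fun U _ => ?_
    by_cases h : ∃ t : Fin k → Fin n, t ≠ s ∧ Orthog (fun l => U l (t l))
    · obtain ⟨t0, ht0, horth⟩ := h
      rw [if_pos ⟨t0, ht0, horth⟩]
      have hle := Finset.single_le_sum
        (s := univ.filter (fun t : Fin k → Fin n => t ≠ s))
        (f := fun t : Fin k → Fin n =>
          if Orthog (fun l => U l (t l)) then plantedWeight k n d p s U else 0)
        (fun t _ => by split
                       · exact hwpos U
                       · exact le_refl 0)
        (Finset.mem_filter.mpr ⟨mem_univ t0, ht0⟩)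
      simpa only [if_pos horth] using hle
    · rw [if_neg h]
      refine Finset.sum_nonneg fun t _ => ?_
      split
      · exact hwpos U
      · exact le_refl 0
  rw [Finset.sum_congr rfl
    (fun t ht => per_t hk0 p s t (Finset.mem_filter.mp ht).2), Finset.sum_const,
    nsmul_eq_mul] at hub
  -- cardinality
  have hcard : (univ.filter (fun t : Fin k → Fin n => t ≠ s)).card = n ^ k - 1 := by
    rw [Finset.filter_ne', Finset.card_erase_of_mem (mem_univ s), Finset.card_univ]
    simp [Fintype.card_fun]
  -- numeric value of (1 - p^k)^d
  have hpk : p ^ k = 1 - (2:ℝ) ^ (-(2*(k:ℝ))/α) := by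
    rw [hp, ← Real.rpow_natCast ((1 - (2:ℝ) ^ (-(2*(k:ℝ))/α)) ^ ((1:ℝ)/(k:ℝ))) k,
      ← Real.rpow_mul hb0, one_div, inv_mul_cancel₀ (ne_of_gt hkR), Real.rpow_one]
  have hE : (1 - p ^ k) ^ d = (n:ℝ) ^ (-(2*(k:ℝ))) := by
    rw [hpk]
    have h1 : (1:ℝ) - (1 - (2:ℝ) ^ (-(2*(k:ℝ))/α)) = (2:ℝ) ^ (-(2*(k:ℝ))/α) := by ring
    rw [h1, ← Real.rpow_natCast ((2:ℝ) ^ (-(2*(k:ℝ))/α)) d,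
      ← Real.rpow_mul (by norm_num : (0:ℝ) ≤ 2), hdα]
    have hexp : (-(2*(k:ℝ))/α) * (α * Real.logb 2 (n:ℝ))
        = Real.logb 2 (n:ℝ) * (-(2*(k:ℝ))) := by
      field_simp
    rw [hexp, Real.rpow_mul (by norm_num : (0:ℝ) ≤ 2),
      Real.rpow_logb (by norm_num) (by norm_num) hn0]
  have hEpos : (0:ℝ) < (n:ℝ) ^ (-(2*(k:ℝ))) := Real.rpow_pos_of_pos hn0 _
  have hcount : ((n ^ k - 1 : ℕ) : ℝ) < (n:ℝ) ^ (k:ℝ) := by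
    have h1 : (1:ℕ) ≤ n ^ k := Nat.one_le_pow _ _ (by omega)
    have h2 : ((n ^ k - 1 : ℕ) : ℝ) = (n:ℝ) ^ k - 1 := by
      push_cast [Nat.cast_sub h1]
      ring
    rw [h2, Real.rpow_natCast]
    have : (0:ℝ) < (n:ℝ) ^ k := by positivity
    linarith
  calc (∑ U : Fin k → Fin n → Fin d → Bool,
        if ∃ t : Fin k → Fin n, t ≠ s ∧ Orthog (fun l => U l (t l)) then
          plantedWeight k n d p s U else 0)
      ≤ ((univ.filter (fun t : Fin k → Fin n => t ≠ s)).card : ℝ) * (1 - p ^ k) ^ d := hub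
    _ = ((n ^ k - 1 : ℕ) : ℝ) * (n:ℝ) ^ (-(2*(k:ℝ))) := by rw [hcard, hE]
    _ < (n:ℝ) ^ (k:ℝ) * (n:ℝ) ^ (-(2*(k:ℝ))) := by
        exact mul_lt_mul_of_pos_right hcount hEpos
    _ = (n : ℝ) ^ (-(k : ℝ)) := by
        rw [← Real.rpow_add hn0]
        ring_nf
end
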